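/- arXiv:0712.0477 — 2 statements merged into one kernel-verified Lean document; each statement's English description precedes it below -/
import Mathlib

section
/- For every natural number n > 1 and every real number x with p_n < x < p_{n+1}^2 (where p_k denotes the k-th prime), the equality Υ_n(x) = π(x) holds, where π(x) is the number of primes less than or equal to x. -/
open Finset

/-- `p k` is the `k`-th prime (1-indexed): `p 1 = 2`, `p 2 = 3`, `p 3 = 5`, ... -/
noncomputable def nthPrime (k : ℕ) : ℕ := Nat.nth Nat.Prime (k - 1)

/-- `σ_{n,m}(x) = Σ_{1 ≤ k₁ < ⋯ < k_m ≤ n} ⌊x / (p_{k₁} ⋯ p_{k_m})⌋`, realized as a sum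
over the `m`-element subsets of `{1, …, n}`. -/
noncomputable def sigma' (n m : ℕ) (x : ℝ) : ℤ :=
  ∑ s ∈ (Finset.Icc 1 n).powersetCard m, ⌊x / ∏ i ∈ s, (nthPrime i : ℝ)⌋

/-- `γ_{n,m}(x)` defined by downward recursion:
`γ_{n,m}(x) = σ_{n,m}(x) − Σ_{k=m+1}^{n} C(k,m) · γ_{n,k}(x)`
(in particular `γ_{n,n}(x) = σ_{n,n}(x)`). -/
noncomputable def gamma' (n m : ℕ) (x : ℝ) : ℤ :=
  sigma' n m x -
    ∑ k ∈ (Finset.Icc (m + 1) n).attach, (Nat.choose k.1 m : ℤ) * gamma' n k.1 x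
termination_by n - m
decreasing_by
  have hk := Finset.mem_Icc.mp k.2
  omega

/-- `Υ_n(x) = ⌊x⌋ − σ_{n,1}(x) + Σ_{k=2}^{n} (k−1)·γ_{n,k}(x) + n − 1`. -/
noncomputable def upsilon (n : ℕ) (x : ℝ) : ℤ :=
  ⌊x⌋ - sigma' n 1 x + ∑ k ∈ Finset.Icc 2 n, ((k : ℤ) - 1) * gamma' n k x + n - 1

/-- `π(x)`: the number of primes `p` with `p ≤ x`. -/
noncomputable def primePi (x : ℝ) : ℕ := ((Finset.range (⌊x⌋₊ + 1)).filter Nat.Prime).card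

namespace UpsilonProof

lemma nthPrime_prime (k : ℕ) : (nthPrime k).Prime := Nat.prime_nth_prime _

lemma nthPrime_mono {k l : ℕ} (h : k ≤ l) : nthPrime k ≤ nthPrime l :=
  Nat.nth_monotone Nat.infinite_setOf_prime (by omega)

lemma nthPrime_strict {k l : ℕ} (hk : 1 ≤ k) (h : k < l) : nthPrime k < nthPrime l :=
  Nat.nth_lt_nth Nat.infinite_setOf_prime |>.mpr (by omega)

/-- The set of indices `k ∈ [1,n]` with `p_k ∣ j`. -/
noncomputable def Sset (n j : ℕ) : Finset ℕ :=
  (Finset.Icc 1 n).filter (fun k => nthPrime k ∣ j)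

lemma Sset_subset (n j : ℕ) : Sset n j ⊆ Finset.Icc 1 n := Finset.filter_subset _ _

lemma Sset_card_le (n j : ℕ) : (Sset n j).card ≤ n := by
  have := Finset.card_le_card (Sset_subset n j)
  simpa [Nat.card_Icc] using this

/-- Number of `j ∈ [1,N]` with exactly `m` of the first `n` primes dividing `j`. -/
noncomputable def cnt (n N m : ℕ) : ℕ :=
  ((Finset.Icc 1 N).filter (fun j => (Sset n j).card = m)).card

lemma cnt_eq_zero {n N m : ℕ} (h : n < m) : cnt n N m = 0 := by
  rw [cnt, Finset.card_eq_zero, Finset.filter_eq_empty_iff]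
  intro j _ hj
  have := Sset_card_le n j
  omega

lemma prod_dvd_iff {n j : ℕ} {s : Finset ℕ} (hs : s ⊆ Finset.Icc 1 n) :
    (∏ i ∈ s, nthPrime i) ∣ j ↔ ∀ i ∈ s, nthPrime i ∣ j := by
  constructor
  · intro h i hi
    exact (Finset.dvd_prod_of_mem _ hi).trans h
  · intro h
    have hinj : ∀ a ∈ s, ∀ b ∈ s, nthPrime a = nthPrime b → a = b := by
      intro a ha b hb hab
      have ha1 : 1 ≤ a := (Finset.mem_Icc.mp (hs ha)).1
      have hb1 : 1 ≤ b := (Finset.mem_Icc.mp (hs hb)).1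
      by_contra hne
      rcases Nat.lt_or_ge a b with hlt | hge
      · exact absurd hab (Nat.ne_of_lt (nthPrime_strict ha1 hlt))
      · have : b < a := by omega
        exact absurd hab.symm (Nat.ne_of_lt (nthPrime_strict hb1 this))
    have := Finset.prod_primes_dvd (s := s.image nthPrime) j
      (fun q hq => by
        obtain ⟨i, _, rfl⟩ := Finset.mem_image.mp hq
        exact (nthPrime_prime i).prime)
      (fun q hq => by
        obtain ⟨i, hi, rfl⟩ := Finset.mem_image.mp hq
        exact h i hi)
    rwa [Finset.prod_image hinj] at this

lemma subset_Sset_iff {n j : ℕ} {s : Finset ℕ} (hs : s ⊆ Finset.Icc 1 n) :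
    s ⊆ Sset n j ↔ ∀ i ∈ s, nthPrime i ∣ j := by
  constructor
  · intro h i hi
    exact (Finset.mem_filter.mp (h hi)).2
  · intro h i hi
    exact Finset.mem_filter.mpr ⟨hs hi, h i hi⟩

lemma floor_eq_card {x : ℝ} (hx : 0 ≤ x) {d : ℕ} (hd : 0 < d) :
    ⌊x / (d : ℝ)⌋ = (((Finset.Icc 1 ⌊x⌋₊).filter (fun j => d ∣ j)).card : ℤ) := by
  have h1 : ⌊x / (d : ℝ)⌋ = ((⌊x / (d : ℝ)⌋₊ : ℕ) : ℤ) :=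
    (Int.natCast_floor_eq_floor (by positivity)).symm
  have h2 : (Finset.Icc 1 ⌊x⌋₊).filter (fun j => d ∣ j)
      = (Finset.Ioc 0 ⌊x⌋₊).filter (fun j => d ∣ j) := by
    congr 1
  rw [h1, Nat.floor_div_natCast, ← Nat.Ioc_filter_dvd_card_eq_div, h2]

lemma sum_card_eq (n N m : ℕ) :
    ∑ s ∈ (Finset.Icc 1 n).powersetCard m,
        ((Finset.Icc 1 N).filter (fun j => s ⊆ Sset n j)).card
      = ∑ j ∈ Finset.Icc 1 N, Nat.choose (Sset n j).card m := by
  simp only [Finset.card_filter]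
  rw [Finset.sum_comm]
  refine Finset.sum_congr rfl fun j _ => ?_
  rw [← Finset.card_filter]
  have heq : ((Finset.Icc 1 n).powersetCard m).filter (fun s => s ⊆ Sset n j)
      = (Sset n j).powersetCard m := by
    ext s
    simp only [Finset.mem_filter, Finset.mem_powersetCard]
    exact ⟨fun h => ⟨h.2, h.1.2⟩, fun h => ⟨⟨h.1.trans (Sset_subset n j), h.2⟩, h.1⟩⟩
  rw [heq, Finset.card_powersetCard]

lemma sigma_eq {x : ℝ} (hx : 0 ≤ x) (n m : ℕ) :
    sigma' n m x = ∑ j ∈ Finset.Icc 1 ⌊x⌋₊, (Nat.choose (Sset n j).card m : ℤ) := by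
  rw [sigma']
  have step : ∀ s ∈ (Finset.Icc 1 n).powersetCard m,
      ⌊x / ∏ i ∈ s, (nthPrime i : ℝ)⌋
        = (((Finset.Icc 1 ⌊x⌋₊).filter (fun j => s ⊆ Sset n j)).card : ℤ) := by
    intro s hs
    have hs' : s ⊆ Finset.Icc 1 n := (Finset.mem_powersetCard.mp hs).1
    have hprod : ∏ i ∈ s, (nthPrime i : ℝ) = ((∏ i ∈ s, nthPrime i : ℕ) : ℝ) := by
      push_cast; rfl
    have hd : 0 < ∏ i ∈ s, nthPrime i :=
      Finset.prod_pos fun i _ => (nthPrime_prime i).pos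
    rw [hprod, floor_eq_card hx hd]
    congr 1
    apply congrArg
    apply Finset.filter_congr
    intro j _
    rw [prod_dvd_iff hs', subset_Sset_iff hs']
  rw [Finset.sum_congr rfl step, ← Nat.cast_sum, sum_card_eq, Nat.cast_sum]

lemma sum_fiber (n N : ℕ) (f : ℕ → ℤ) :
    ∑ j ∈ Finset.Icc 1 N, f (Sset n j).card
      = ∑ k ∈ Finset.range (n + 1), (cnt n N k : ℤ) * f k := by
  rw [← Finset.sum_fiberwise_of_maps_to (g := fun j => (Sset n j).card)
      (t := Finset.range (n + 1))
      (fun j _ => Finset.mem_range.mpr (Nat.lt_succ_of_le (Sset_card_le n j)))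
      (fun j => f (Sset n j).card)]
  refine Finset.sum_congr rfl fun k _ => ?_
  rw [Finset.sum_congr rfl (fun j hj => by rw [(Finset.mem_filter.mp hj).2]),
    Finset.sum_const, cnt]
  simp [nsmul_eq_mul]

lemma key_sum (n N m : ℕ) :
    ∑ k ∈ Finset.range (n + 1), (cnt n N k : ℤ) * (Nat.choose k m : ℤ)
      - ∑ k ∈ Finset.Icc (m + 1) n, (Nat.choose k m : ℤ) * (cnt n N k : ℤ)
      = (cnt n N m : ℤ) := by
  rcases le_or_gt m n with hmn | hmn
  · have hsub : ∑ k ∈ Finset.range (n + 1), (cnt n N k : ℤ) * (Nat.choose k m : ℤ)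
        = ∑ k ∈ Finset.Icc m n, (cnt n N k : ℤ) * (Nat.choose k m : ℤ) := by
      refine (Finset.sum_subset ?_ ?_).symm
      · intro k hk
        simp only [Finset.mem_Icc] at hk
        simp only [Finset.mem_range]
        omega
      · intro k hk hk2
        simp only [Finset.mem_range] at hk
        simp only [Finset.mem_Icc] at hk2
        have : k < m := by omega
        simp [Nat.choose_eq_zero_of_lt this]
    have hins : Finset.Icc m n = insert m (Finset.Icc (m + 1) n) := by
      ext k
      simp only [Finset.mem_Icc, Finset.mem_insert]
      omega
    have hcomm : ∑ k ∈ Finset.Icc (m + 1) n, (Nat.choose k m : ℤ) * (cnt n N k : ℤ)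
        = ∑ k ∈ Finset.Icc (m + 1) n, (cnt n N k : ℤ) * (Nat.choose k m : ℤ) :=
      Finset.sum_congr rfl fun k _ => mul_comm _ _
    rw [hsub, hins, Finset.sum_insert (by simp), hcomm, Nat.choose_self]
    ring
  · have h1 : ∑ k ∈ Finset.range (n + 1), (cnt n N k : ℤ) * (Nat.choose k m : ℤ) = 0 :=
      Finset.sum_eq_zero fun k hk => by
        have : k < m := by
          have := Finset.mem_range.mp hk
          omega
        simp [Nat.choose_eq_zero_of_lt this]
    have h2 : Finset.Icc (m + 1) n = ∅ := Finset.Icc_eq_empty (by omega)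
    rw [h1, h2, cnt_eq_zero hmn]
    simp

lemma gamma_eq {x : ℝ} (hx : 0 ≤ x) (n m : ℕ) : gamma' n m x = (cnt n ⌊x⌋₊ m : ℤ) := by
  rw [gamma']
  rw [Finset.sum_attach (Finset.Icc (m + 1) n)
    (fun k => (Nat.choose k m : ℤ) * gamma' n k x)]
  have hrec : ∑ k ∈ Finset.Icc (m + 1) n, (Nat.choose k m : ℤ) * gamma' n k x
      = ∑ k ∈ Finset.Icc (m + 1) n, (Nat.choose k m : ℤ) * (cnt n ⌊x⌋₊ k : ℤ) := by
    refine Finset.sum_congr rfl fun k hk => ?_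
    have hk' := Finset.mem_Icc.mp hk
    rw [gamma_eq hx n k]
  rw [hrec, sigma_eq hx n m,
    sum_fiber n ⌊x⌋₊ (fun c => (Nat.choose c m : ℤ)), key_sum]
termination_by n - m
decreasing_by omega

lemma prime_eq_nthPrime_of_le {q n : ℕ} (hq : q.Prime) (hn : 1 ≤ n)
    (h : q ≤ nthPrime n) : ∃ k, k ∈ Finset.Icc 1 n ∧ nthPrime k = q := by
  refine ⟨Nat.count Nat.Prime q + 1, ?_, ?_⟩
  · rw [Finset.mem_Icc]
    have hle : Nat.count Nat.Prime q ≤ n - 1 :=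
      (Nat.count_le_iff_le_nth Nat.infinite_setOf_prime).mpr h
    omega
  · rw [nthPrime]
    simpa using Nat.nth_count hq

lemma nthPrime_succ_le {q n : ℕ} (hq : q.Prime) (hn : 1 ≤ n)
    (h : nthPrime n < q) : nthPrime (n + 1) ≤ q := by
  rw [nthPrime] at h ⊢
  have h1 : n - 1 < Nat.count Nat.Prime q :=
    (Nat.lt_nth_iff_count_lt Nat.infinite_setOf_prime).mpr h
  have h2 : n + 1 - 1 ≤ Nat.count Nat.Prime q := by omega
  calc Nat.nth Nat.Prime (n + 1 - 1)
      ≤ Nat.nth Nat.Prime (Nat.count Nat.Prime q) :=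
        Nat.nth_monotone Nat.infinite_setOf_prime h2
    _ = q := Nat.nth_count hq

lemma count_final {n : ℕ} (hn : 1 ≤ n) {x : ℝ}
    (hx₁ : (nthPrime n : ℝ) < x) (hx₂ : x < (nthPrime (n + 1) : ℝ) ^ 2) :
    cnt n ⌊x⌋₊ 0 + n = primePi x + 1 := by
  have hx0 : (0 : ℝ) ≤ x := le_trans (Nat.cast_nonneg _) hx₁.le
  set N := ⌊x⌋₊ with hN
  have hpnN : nthPrime n ≤ N := Nat.le_floor hx₁.le
  have hNx : (N : ℝ) ≤ x := Nat.floor_le hx0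
  have h2pn : 2 ≤ nthPrime n := (nthPrime_prime n).two_le
  have hN1 : 1 ≤ N := by omega
  set B : Finset ℕ := (Finset.Icc 1 N).filter (fun j => j.Prime ∧ nthPrime n < j) with hB
  -- Step 1: the zero-fiber is {1} ∪ B
  have hA : (Finset.Icc 1 N).filter (fun j => (Sset n j).card = 0) = insert 1 B := by
    ext j
    simp only [Finset.mem_filter, Finset.mem_insert, Finset.mem_Icc, hB]
    simp only [Finset.card_eq_zero, Sset, Finset.filter_eq_empty_iff, Finset.mem_Icc]
    constructor
    · rintro ⟨⟨hj1, hjN⟩, hnd⟩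
      by_cases hj : j = 1
      · exact Or.inl hj
      right
      have hj2 : 2 ≤ j := by omega
      have hqp : j.minFac.Prime := Nat.minFac_prime hj
      have hqd : j.minFac ∣ j := Nat.minFac_dvd j
      have hqgt : nthPrime n < j.minFac := by
        by_contra hle
        obtain ⟨k, hk, hkq⟩ := prime_eq_nthPrime_of_le hqp hn (not_lt.mp hle)
        exact hnd (Finset.mem_Icc.mp hk) (hkq ▸ hqd)
      have hjp : j.Prime := by
        by_contra hnp
        have hsq : j.minFac ^ 2 ≤ j := Nat.minFac_sq_le_self (by omega) hnp
        have hq1 : nthPrime (n + 1) ≤ j.minFac := nthPrime_succ_le hqp hn hqgt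
        have hle1 : (nthPrime (n + 1) : ℝ) ^ 2 ≤ (j : ℝ) := by
          calc (nthPrime (n + 1) : ℝ) ^ 2 ≤ (j.minFac : ℝ) ^ 2 := by
                apply pow_le_pow_left₀ (Nat.cast_nonneg _) (Nat.cast_le.mpr hq1)
            _ ≤ (j : ℝ) := by exact_mod_cast hsq
        have hjx : (j : ℝ) ≤ x := le_trans (Nat.cast_le.mpr hjN) hNx
        linarith
      have hqj : j.minFac = j := (Nat.prime_dvd_prime_iff_eq hqp hjp).mp hqd
      exact ⟨⟨hj1, hjN⟩, hjp, by omega⟩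
    · rintro (rfl | ⟨⟨hj1, hjN⟩, hjp, hjgt⟩)
      · refine ⟨⟨le_refl 1, hN1⟩, ?_⟩
        intro k _ hdvd
        have h1 := Nat.le_of_dvd one_pos hdvd
        have h2 := (nthPrime_prime k).two_le
        omega
      · refine ⟨⟨hj1, hjN⟩, ?_⟩
        intro k hk hdvd
        have hk' := hk
        have heq : nthPrime k = j :=
          (Nat.prime_dvd_prime_iff_eq (nthPrime_prime k) hjp).mp hdvd
        have hle : nthPrime k ≤ nthPrime n := nthPrime_mono hk'.2
        omega
  have h1B : 1 ∉ B := by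
    simp [hB, Nat.not_prime_one]
  have hcnt0 : cnt n N 0 = B.card + 1 := by
    rw [cnt, hA, Finset.card_insert_of_notMem h1B]
  -- Step 2: primePi x = n + B.card
  have hsplit := Finset.card_filter_add_card_filter_not
    (s := (Finset.range (N + 1)).filter Nat.Prime) (p := fun q => q ≤ nthPrime n)
  have hP1 : ((Finset.range (N + 1)).filter Nat.Prime).filter (fun q => q ≤ nthPrime n)
      = (Finset.range (nthPrime n + 1)).filter Nat.Prime := by
    ext q
    simp only [Finset.mem_filter, Finset.mem_range]
    constructor
    · rintro ⟨⟨_, hq⟩, hle⟩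
      exact ⟨by omega, hq⟩
    · rintro ⟨hlt, hq⟩
      exact ⟨⟨by omega, hq⟩, by omega⟩
  have hP1card : (((Finset.range (N + 1)).filter Nat.Prime).filter
      (fun q => q ≤ nthPrime n)).card = n := by
    rw [hP1, ← Nat.count_eq_card_filter_range, nthPrime,
      Nat.count_nth_succ_of_infinite Nat.infinite_setOf_prime]
    omega
  have hP2 : ((Finset.range (N + 1)).filter Nat.Prime).filter (fun q => ¬ q ≤ nthPrime n)
      = B := by
    ext q
    simp only [Finset.mem_filter, Finset.mem_range, Finset.mem_Icc, not_le, hB]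
    constructor
    · rintro ⟨⟨hq, hqp⟩, hgt⟩
      exact ⟨⟨hqp.one_lt.le, by omega⟩, hqp, hgt⟩
    · rintro ⟨⟨hq1, hqN⟩, hqp, hgt⟩
      exact ⟨⟨by omega, hqp⟩, hgt⟩
  rw [hP1card, hP2] at hsplit
  rw [primePi, ← hN] at *
  omega

end UpsilonProof

theorem upsilon_eq_primePi
    (n : ℕ) (hn : 1 < n) (x : ℝ)
    (hx₁ : (nthPrime n : ℝ) < x) (hx₂ : x < (nthPrime (n + 1) : ℝ) ^ 2) :
    upsilon n x = (primePi x : ℤ) := by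
  open UpsilonProof in
  have hx0 : (0 : ℝ) ≤ x := le_trans (Nat.cast_nonneg _) hx₁.le
  set N := ⌊x⌋₊ with hN
  have hfloor : ⌊x⌋ = (N : ℤ) := (Int.natCast_floor_eq_floor hx0).symm
  have hσ : sigma' n 1 x = ∑ k ∈ Finset.range (n + 1), (cnt n N k : ℤ) * (k : ℤ) := by
    rw [UpsilonProof.sigma_eq hx0 n 1,
      UpsilonProof.sum_fiber n N (fun c => (Nat.choose c 1 : ℤ))]
    exact Finset.sum_congr rfl fun k _ => by rw [Nat.choose_one_right]
  have hγ : ∑ k ∈ Finset.Icc 2 n, ((k : ℤ) - 1) * gamma' n k x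
      = ∑ k ∈ Finset.Icc 2 n, ((k : ℤ) - 1) * (cnt n N k : ℤ) :=
    Finset.sum_congr rfl fun k _ => by rw [UpsilonProof.gamma_eq hx0 n k]
  have hNsum : (N : ℤ) = ∑ k ∈ Finset.range (n + 1), (cnt n N k : ℤ) := by
    have h := UpsilonProof.sum_fiber n N (fun _ => (1 : ℤ))
    simp only [mul_one] at h
    rw [← h, Finset.sum_const, Nat.card_Icc]
    simp
  have hins : Finset.range (n + 1) = insert 0 (insert 1 (Finset.Icc 2 n)) := by
    ext k
    simp only [Finset.mem_range, Finset.mem_insert, Finset.mem_Icc]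
    omega
  have hsum2 : ∑ k ∈ Finset.range (n + 1), ((k : ℤ) - 1) * (cnt n N k : ℤ)
      = -(cnt n N 0 : ℤ) + ∑ k ∈ Finset.Icc 2 n, ((k : ℤ) - 1) * (cnt n N k : ℤ) := by
    rw [hins, Finset.sum_insert (by simp), Finset.sum_insert (by simp)]
    norm_num
  have hzero : ∑ k ∈ Finset.range (n + 1),
      ((cnt n N k : ℤ) - (cnt n N k : ℤ) * (k : ℤ) + ((k : ℤ) - 1) * (cnt n N k : ℤ)) = 0 :=
    Finset.sum_eq_zero fun k _ => by ring
  rw [Finset.sum_add_distrib, Finset.sum_sub_distrib] at hzero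
  have hcount := UpsilonProof.count_final (by omega : 1 ≤ n) hx₁ hx₂
  rw [← hN] at hcount
  rw [upsilon, hfloor, hσ, hγ]
  have hγ2 : ∑ k ∈ Finset.Icc 2 n, ((k : ℤ) - 1) * (cnt n N k : ℤ)
      = ∑ k ∈ Finset.range (n + 1), ((k : ℤ) - 1) * (cnt n N k : ℤ) + (cnt n N 0 : ℤ) := by
    rw [hsum2]; ring
  rw [hγ2, hNsum]
  omega
end

section
/- For every real number x ≥ 0: π(x) = 0 if x < 2; π(x) = 1 if 2 ≤ x < 3; π(x) = 2 if x = 3; and π(x) = Υ_n(x) whenever n ≥ 2 and p_n < x < p_{n+1}^2 (where p_k denotes the k-th prime). -/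
open Finset

lemma nthPrime_prime (k : ℕ) : (nthPrime k).Prime := Nat.prime_nth_prime _

lemma nthPrime_lt_nthPrime {i j : ℕ} (hi : 1 ≤ i) (h : i < j) : nthPrime i < nthPrime j := by
  unfold nthPrime
  rw [Nat.nth_lt_nth Nat.infinite_setOf_prime]
  omega

lemma nthPrime_le_nthPrime {i j : ℕ} (h : i ≤ j) : nthPrime i ≤ nthPrime j := by
  unfold nthPrime
  rw [Nat.nth_le_nth Nat.infinite_setOf_prime]
  omega

lemma two_le_nthPrime (k : ℕ) : 2 ≤ nthPrime k := (nthPrime_prime k).two_le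

/-- number of distinct primes among the first `n` dividing `j` -/
noncomputable def omega' (n j : ℕ) : ℕ := ((Icc 1 n).filter (fun i => nthPrime i ∣ j)).card

noncomputable def gcount (n N k : ℕ) : ℕ := ((Ioc 0 N).filter (fun j => omega' n j = k)).card

lemma omega'_le (n j : ℕ) : omega' n j ≤ n := by
  calc ((Icc 1 n).filter (fun i => nthPrime i ∣ j)).card ≤ (Icc 1 n).card :=
        card_filter_le _ _
    _ = n := by simp

lemma floor_div_nat_int {x : ℝ} (hx : 0 ≤ x) {d : ℕ} (hd : 0 < d) :
    ⌊x / (d : ℝ)⌋ = ((⌊x⌋₊ / d : ℕ) : ℤ) := by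
  rw [← Nat.floor_div_natCast, Int.natCast_floor_eq_floor]
  positivity

lemma prod_nthPrime_dvd {s : Finset ℕ} (hs : ∀ i ∈ s, 1 ≤ i) {j : ℕ}
    (h : ∀ i ∈ s, nthPrime i ∣ j) : (∏ i ∈ s, nthPrime i) ∣ j := by
  have hinj : Set.InjOn nthPrime s := by
    intro a ha b hb hab
    by_contra hne
    rcases Nat.lt_or_ge a b with hlt | hge
    · exact absurd hab (Nat.ne_of_lt (nthPrime_lt_nthPrime (hs a ha) hlt))
    · have : b < a := by omega
      exact absurd hab.symm (Nat.ne_of_lt (nthPrime_lt_nthPrime (hs b hb) this))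
  have him : ∏ p ∈ s.image nthPrime, p = ∏ i ∈ s, nthPrime i :=
    Finset.prod_image (fun a ha b hb => hinj ha hb)
  rw [← him]
  refine Finset.prod_primes_dvd _ ?_ ?_
  · intro p hp
    rcases Finset.mem_image.mp hp with ⟨i, hi, rfl⟩
    exact (nthPrime_prime i).prime
  · intro p hp
    rcases Finset.mem_image.mp hp with ⟨i, hi, rfl⟩
    exact h i hi

lemma sigma'_eq (n m : ℕ) (x : ℝ) (hx : 0 ≤ x) :
    sigma' n m x = ∑ j ∈ Ioc 0 ⌊x⌋₊, ((omega' n j).choose m : ℤ) := by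
  set N := ⌊x⌋₊
  have step1 : sigma' n m x
      = ∑ s ∈ (Icc 1 n).powersetCard m, (((Ioc 0 N).filter (fun j => (∏ i ∈ s, nthPrime i) ∣ j)).card : ℤ) := by
    unfold sigma'
    refine Finset.sum_congr rfl fun s hs => ?_
    have hsub : s ⊆ Icc 1 n := (Finset.mem_powersetCard.mp hs).1
    have hpos : 0 < ∏ i ∈ s, nthPrime i :=
      Finset.prod_pos fun i _ => (nthPrime_prime i).pos
    rw [Nat.Ioc_filter_dvd_card_eq_div, ← floor_div_nat_int hx hpos]
    congr 1
    push_cast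
    rfl
  rw [step1]
  have step2 : ∀ s ∈ (Icc 1 n).powersetCard m,
      (((Ioc 0 N).filter (fun j => (∏ i ∈ s, nthPrime i) ∣ j)).card : ℤ)
        = ∑ j ∈ Ioc 0 N, (if (∏ i ∈ s, nthPrime i) ∣ j then (1 : ℤ) else 0) := by
    intro s _
    rw [Finset.card_filter]
    push_cast
    rfl
  rw [Finset.sum_congr rfl step2, Finset.sum_comm]
  refine Finset.sum_congr rfl fun j hj => ?_
  rw [Finset.sum_boole]
  have hset : ((Icc 1 n).powersetCard m).filter (fun s => (∏ i ∈ s, nthPrime i) ∣ j)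
      = ((Icc 1 n).filter (fun i => nthPrime i ∣ j)).powersetCard m := by
    ext s
    simp only [Finset.mem_filter, Finset.mem_powersetCard]
    constructor
    · rintro ⟨⟨hsub, hcard⟩, hdvd⟩
      refine ⟨fun i hi => Finset.mem_filter.mpr ⟨hsub hi, ?_⟩, hcard⟩
      exact dvd_trans (Finset.dvd_prod_of_mem _ hi) hdvd
    · rintro ⟨hsub, hcard⟩
      have hsub' : s ⊆ Icc 1 n := fun i hi => (Finset.mem_filter.mp (hsub hi)).1
      refine ⟨⟨hsub', hcard⟩, prod_nthPrime_dvd ?_ ?_⟩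
      · intro i hi
        exact (Finset.mem_Icc.mp (hsub' hi)).1
      · intro i hi
        exact (Finset.mem_filter.mp (hsub hi)).2
  rw [hset, Finset.card_powersetCard]
  rfl

lemma sigma'_eq_g (n m : ℕ) (x : ℝ) (hx : 0 ≤ x) :
    sigma' n m x = ∑ k ∈ Finset.range (n + 1), (k.choose m : ℤ) * gcount n ⌊x⌋₊ k := by
  rw [sigma'_eq n m x hx]
  rw [← Finset.sum_fiberwise_of_maps_to (g := fun j => omega' n j) (t := Finset.range (n+1))
      (fun j _ => Finset.mem_range.mpr (Nat.lt_succ_of_le (omega'_le n j)))]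
  refine Finset.sum_congr rfl fun k _ => ?_
  rw [Finset.sum_congr rfl (fun j hj => by rw [(Finset.mem_filter.mp hj).2]),
    Finset.sum_const, nsmul_eq_mul]
  rw [mul_comm]
  rfl

lemma gamma'_eq (n : ℕ) (x : ℝ) (hx : 0 ≤ x) (m : ℕ) (hm : m ≤ n) :
    gamma' n m x = gcount n ⌊x⌋₊ m := by
  rw [gamma']
  have hrec : ∀ k ∈ (Finset.Icc (m + 1) n).attach,
      (k.1.choose m : ℤ) * gamma' n k.1 x = (k.1.choose m : ℤ) * gcount n ⌊x⌋₊ k.1 := by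
    intro k _
    have hk := Finset.mem_Icc.mp k.2
    rw [gamma'_eq n x hx k.1 hk.2]
  rw [Finset.sum_congr rfl hrec, sigma'_eq_g n m x hx]
  rw [Finset.sum_attach (Finset.Icc (m + 1) n) (fun k => (k.choose m : ℤ) * gcount n ⌊x⌋₊ k)]
  have h1 : ∑ k ∈ Finset.range (n + 1), (k.choose m : ℤ) * gcount n ⌊x⌋₊ k
      = ∑ k ∈ Finset.Icc m n, (k.choose m : ℤ) * gcount n ⌊x⌋₊ k := by
    refine (Finset.sum_subset ?_ ?_).symm
    · intro k hk
      have := Finset.mem_Icc.mp hk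
      exact Finset.mem_range.mpr (by omega)
    · intro k hk1 hk2
      have hk3 : k < m := by
        have := Finset.mem_range.mp hk1
        rcases Nat.lt_or_ge k m with h | h
        · exact h
        · exact absurd (Finset.mem_Icc.mpr ⟨h, by omega⟩) hk2
      rw [Nat.choose_eq_zero_of_lt hk3]
      simp
  have h2 : Finset.Icc m n = insert m (Finset.Icc (m + 1) n) := by
    ext k
    simp only [Finset.mem_Icc, Finset.mem_insert]
    omega
  rw [h1, h2, Finset.sum_insert (by simp), Nat.choose_self]
  ring
termination_by n - m
decreasing_by
  have hk := Finset.mem_Icc.mp k.2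
  omega

lemma floor_eq_sum_g (n : ℕ) (x : ℝ) (hx : 0 ≤ x) :
    (⌊x⌋₊ : ℤ) = ∑ k ∈ Finset.range (n + 1), (gcount n ⌊x⌋₊ k : ℤ) := by
  have h := Finset.card_eq_sum_card_fiberwise
      (f := fun j => omega' n j) (s := Ioc 0 ⌊x⌋₊) (t := Finset.range (n + 1))
      (fun j _ => Finset.mem_range.mpr (Nat.lt_succ_of_le (omega'_le n j)))
  rw [Nat.card_Ioc, Nat.sub_zero] at h
  unfold gcount
  exact_mod_cast h

lemma upsilon_eq (n : ℕ) (x : ℝ) (hx : 0 ≤ x) (hn : 1 ≤ n) :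
    upsilon n x = (gcount n ⌊x⌋₊ 0 : ℤ) + n - 1 := by
  unfold upsilon
  set g : ℕ → ℤ := fun k => (gcount n ⌊x⌋₊ k : ℤ) with hg
  have hfl : (⌊x⌋ : ℤ) = (⌊x⌋₊ : ℤ) := (Int.natCast_floor_eq_floor hx).symm
  have h3 : ∑ k ∈ Finset.Icc 2 n, ((k : ℤ) - 1) * gamma' n k x
      = ∑ k ∈ Finset.Icc 2 n, ((k : ℤ) - 1) * g k :=
    Finset.sum_congr rfl fun k hk => by
      rw [gamma'_eq n x hx k (Finset.mem_Icc.mp hk).2]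
  rw [hfl, floor_eq_sum_g n x hx, sigma'_eq_g n 1 x hx, h3]
  have hsplit : Finset.range (n + 1) = insert 0 (insert 1 (Finset.Icc 2 n)) := by
    ext k
    simp only [Finset.mem_range, Finset.mem_insert, Finset.mem_Icc]
    omega
  rw [hsplit, Finset.sum_insert (by simp), Finset.sum_insert (by simp),
    Finset.sum_insert (by simp), Finset.sum_insert (by simp)]
  simp only [Nat.choose_one_right]
  have hzero : ∑ k ∈ Finset.Icc 2 n, g k - ∑ k ∈ Finset.Icc 2 n, (k : ℤ) * g k
      + ∑ k ∈ Finset.Icc 2 n, ((k : ℤ) - 1) * g k = 0 := by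
    rw [← Finset.sum_sub_distrib, ← Finset.sum_add_distrib]
    exact Finset.sum_eq_zero fun k _ => by ring
  push_cast
  linarith [hzero]

lemma count_nthPrime (n : ℕ) (hn : 1 ≤ n) :
    ((Finset.range (nthPrime n + 1)).filter Nat.Prime).card = n := by
  rw [← Nat.count_eq_card_filter_range, Nat.count_succ]
  unfold nthPrime
  rw [Nat.count_nth_of_infinite Nat.infinite_setOf_prime]
  have : Nat.Prime (Nat.nth Nat.Prime (n - 1)) := Nat.prime_nth_prime _
  simp only [this, if_pos]
  omega

lemma pi_split (n N : ℕ) (hn : 1 ≤ n) (hN : nthPrime n ≤ N) :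
    ((Finset.range (N + 1)).filter Nat.Prime).card
      = n + ((Finset.Ioc (nthPrime n) N).filter Nat.Prime).card := by
  have hsplit : Finset.range (N + 1)
      = Finset.range (nthPrime n + 1) ∪ Finset.Ioc (nthPrime n) N := by
    ext k
    simp only [Finset.mem_range, Finset.mem_union, Finset.mem_Ioc]
    omega
  have hdisj : Disjoint (Finset.range (nthPrime n + 1)) (Finset.Ioc (nthPrime n) N) := by
    rw [Finset.disjoint_left]
    intro k hk1 hk2
    simp only [Finset.mem_range] at hk1
    simp only [Finset.mem_Ioc] at hk2
    omega
  rw [hsplit, Finset.filter_union, Finset.card_union_of_disjoint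
    (Finset.disjoint_filter_filter hdisj), count_nthPrime n hn]

lemma prime_le_nth {q n : ℕ} (hq : q.Prime) (hle : q ≤ Nat.nth Nat.Prime n) :
    ∃ i ≤ n, q = Nat.nth Nat.Prime i := by
  refine ⟨Nat.count Nat.Prime q, ?_, (Nat.nth_count hq).symm⟩
  by_contra hgt
  push_neg at hgt
  have h2 := (Nat.nth_lt_nth Nat.infinite_setOf_prime).mpr hgt
  rw [Nat.nth_count hq] at h2
  exact absurd hle (not_le.mpr h2)

lemma g0_eq (n N : ℕ) (hn : 1 ≤ n) (hN : nthPrime n ≤ N) (hN2 : N < nthPrime (n + 1) ^ 2) :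
    (Ioc 0 N).filter (fun j => omega' n j = 0)
      = insert 1 ((Finset.Ioc (nthPrime n) N).filter Nat.Prime) := by
  ext j
  simp only [Finset.mem_filter]
  simp only [Finset.mem_filter, Finset.mem_Ioc, Finset.mem_insert, omega',
    Finset.card_eq_zero, Finset.filter_eq_empty_iff, Finset.mem_Icc]
  constructor
  · rintro ⟨⟨hj0, hjN⟩, hnd⟩
    by_cases hj1 : j = 1
    · exact Or.inl hj1
    right
    have hq : j.minFac.Prime := Nat.minFac_prime hj1
    have hqdvd : j.minFac ∣ j := Nat.minFac_dvd j
    have hqgt : nthPrime n < j.minFac := by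
      by_contra hle
      push_neg at hle
      obtain ⟨i, hi, hqe⟩ := prime_le_nth hq (hle.trans (le_of_eq rfl))
      have hmem : 1 ≤ i + 1 ∧ i + 1 ≤ n := ⟨by omega, by
        rcases Nat.eq_or_lt_of_le hi with h | h
        · omega
        · omega⟩
      refine hnd hmem ?_
      show nthPrime (i + 1) ∣ j
      unfold nthPrime
      simpa using hqe ▸ hqdvd
    have hqge : nthPrime (n + 1) ≤ j.minFac := by
      have hcnt : n ≤ Nat.count Nat.Prime j.minFac := by
        by_contra hlt
        push_neg at hlt
        have h3 := (Nat.nth_le_nth Nat.infinite_setOf_prime).mpr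
          (show Nat.count Nat.Prime j.minFac ≤ n - 1 by omega)
        rw [Nat.nth_count hq] at h3
        have : j.minFac ≤ nthPrime n := h3
        omega
      have h4 := (Nat.nth_le_nth Nat.infinite_setOf_prime).mpr hcnt
      rw [Nat.nth_count hq] at h4
      have : nthPrime (n + 1) = Nat.nth Nat.Prime n := by
        unfold nthPrime
        norm_num
      rw [this]
      exact h4
    have hjp : j.Prime := by
      by_contra hnp
      have hsq := Nat.minFac_sq_le_self hj0 hnp
      have : nthPrime (n + 1) ^ 2 ≤ j.minFac ^ 2 := Nat.pow_le_pow_left hqge 2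
      omega
    refine ⟨⟨?_, hjN⟩, hjp⟩
    have := (Nat.prime_dvd_prime_iff_eq hq hjp).mp hqdvd
    omega
  · rintro (rfl | ⟨⟨hgt, hle⟩, hp⟩)
    · refine ⟨⟨one_pos, by have := two_le_nthPrime n; omega⟩, fun i _ hdvd => ?_⟩
      have := Nat.le_of_dvd one_pos hdvd
      have := two_le_nthPrime i
      omega
    · refine ⟨⟨by omega, hle⟩, fun i hi hdvd => ?_⟩
      have heq := (Nat.prime_dvd_prime_iff_eq (nthPrime_prime i) hp).mp hdvd
      have : nthPrime i ≤ nthPrime n := nthPrime_le_nthPrime hi.2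
      omega

theorem primePi_eq
    (x : ℝ) (hx : 0 ≤ x) :
    (x < 2 → primePi x = 0) ∧
    (2 ≤ x → x < 3 → primePi x = 1) ∧
    (x = 3 → primePi x = 2) ∧
    (∀ n : ℕ, 2 ≤ n → (nthPrime n : ℝ) < x → x < (nthPrime (n + 1) : ℝ) ^ 2 →
      (primePi x : ℤ) = upsilon n x) := by
  refine ⟨?_, ?_, ?_, ?_⟩
  · intro h
    have h2 : ⌊x⌋₊ < 2 := by
      rw [Nat.floor_lt hx]
      exact_mod_cast h
    interval_cases h : ⌊x⌋₊ <;> (unfold primePi; rw [h]; decide)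
  · intro h1 h2
    have h3 : ⌊x⌋₊ = 2 := by
      rw [Nat.floor_eq_iff hx]
      constructor <;> [exact_mod_cast h1; exact_mod_cast h2]
    unfold primePi
    rw [h3]
    decide
  · intro h
    have h3 : ⌊x⌋₊ = 3 := by
      rw [h]
      exact_mod_cast Nat.floor_natCast 3
    unfold primePi
    rw [h3]
    decide
  · intro n hn hlt hlt2
    set N := ⌊x⌋₊ with hNdef
    have hN1 : nthPrime n ≤ N := Nat.le_floor hlt.le
    have hN2 : N < nthPrime (n + 1) ^ 2 := by
      rw [hNdef, Nat.floor_lt hx]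
      push_cast
      exact hlt2
    have hn1 : 1 ≤ n := by omega
    have hpi : primePi x = n + ((Finset.Ioc (nthPrime n) N).filter Nat.Prime).card :=
      pi_split n N hn1 hN1
    have hg0 : gcount n N 0 = 1 + ((Finset.Ioc (nthPrime n) N).filter Nat.Prime).card := by
      unfold gcount
      rw [g0_eq n N hn1 hN1 hN2, Finset.card_insert_of_notMem (by
        simp only [Finset.mem_filter]
        rintro ⟨-, hp⟩
        exact Nat.not_prime_one hp)]
      omega
    rw [upsilon_eq n x hx hn1, hpi, ← hNdef, hg0]
    push_cast
    ring
end
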